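/- Let $\hat{C}$ be a $p\times p$ symmetric matrix with unit diagonal such that $\hat{C} \neq I_p$, i.e., $\hat{C}_{ij} \neq 0$ for some $i \neq j$. Then the function $f(R, D) = -\log\det(R) - 2(1-\alpha)\log\det(D) + \operatorname{tr}(RD\hat{C}D)$, defined for $R$ positive definite with unit diagonal and $D$ diagonal with positive entries, is not convex on its (convex) domain, for any $\alpha < 1$. -/

import Mathlib

open Matrix

def stmt9pert {p : ℕ} (i j : Fin p) (m : ℝ) : Matrix (Fin p) (Fin p) ℝ :=
  Matrix.of fun k l => if k = i ∧ l = j ∨ k = j ∧ l = i then m else 0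

lemma stmt9pert_apply {p : ℕ} (i j : Fin p) (m : ℝ) (k l : Fin p) :
    stmt9pert i j m k l = if k = i ∧ l = j ∨ k = j ∧ l = i then m else 0 := rfl

lemma stmt9_herm {p : ℕ} (i j : Fin p) (m : ℝ) :
    ((1 : Matrix (Fin p) (Fin p) ℝ) + stmt9pert i j m).IsHermitian := by
  ext k l
  simp only [conjTranspose_apply, Matrix.add_apply, one_apply, stmt9pert_apply, star_trivial]
  by_cases h : k = l <;> simp [h, eq_comm, and_comm, or_comm]

lemma stmt9_diag {p : ℕ} (i j : Fin p) (hij : i ≠ j) (m : ℝ) (k : Fin p) :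
    ((1 : Matrix (Fin p) (Fin p) ℝ) + stmt9pert i j m) k k = 1 := by
  have : ¬(k = i ∧ k = j ∨ k = j ∧ k = i) := by
    rintro (⟨h1, h2⟩ | ⟨h1, h2⟩) <;> exact hij (h1 ▸ h2 ▸ rfl)
  simp [stmt9pert_apply, this]

lemma stmt9_quad {p : ℕ} (i j : Fin p) (hij : i ≠ j) (m : ℝ) (x : Fin p → ℝ) :
    x ⬝ᵥ (stmt9pert i j m *ᵥ x) = 2 * m * x i * x j := by
  have hsplit : ∀ k l, (if k = i ∧ l = j ∨ k = j ∧ l = i then m else 0) * x l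
      = (if k = i then (if l = j then m * x l else 0) else 0)
        + (if k = j then (if l = i then m * x l else 0) else 0) := by
    intro k l
    by_cases h1 : k = i <;> by_cases h2 : k = j <;> by_cases h3 : l = i <;>
      by_cases h4 : l = j <;> simp_all
  have hrow : ∀ k, (stmt9pert i j m *ᵥ x) k
      = (if k = i then m * x j else 0) + (if k = j then m * x i else 0) := by
    intro k
    simp only [mulVec, dotProduct, stmt9pert_apply]
    rw [Finset.sum_congr rfl (fun l _ => hsplit k l), Finset.sum_add_distrib]
    congr 1 <;> split_ifs with h <;> simp [Finset.sum_ite_eq']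
  simp only [dotProduct, hrow, mul_add, mul_ite, mul_zero, Finset.sum_add_distrib,
    Finset.sum_ite_eq', Finset.mem_univ, if_true]
  ring

lemma stmt9_posdef {p : ℕ} (i j : Fin p) (hij : i ≠ j) (m : ℝ) (hm : |m| ≤ 1/2) :
    ((1 : Matrix (Fin p) (Fin p) ℝ) + stmt9pert i j m).PosDef := by
  refine Matrix.PosDef.of_dotProduct_mulVec_pos (stmt9_herm i j m) fun x hx => ?_
  have hq : star x ⬝ᵥ ((1 + stmt9pert i j m) *ᵥ x) = (∑ k, x k ^ 2) + 2 * m * x i * x j := by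
    rw [star_trivial, add_mulVec, one_mulVec, dotProduct_add, stmt9_quad i j hij m x]
    simp [dotProduct, sq]
  rw [hq]
  obtain ⟨k0, hk0⟩ := Function.ne_iff.mp hx
  have hS : x i ^ 2 + x j ^ 2 ≤ ∑ k, x k ^ 2 := by
    have := Finset.sum_le_sum_of_subset_of_nonneg (Finset.subset_univ {i, j})
      (fun k _ _ => sq_nonneg (x k))
    rwa [Finset.sum_pair hij] at this
  have hpos : 0 < ∑ k, x k ^ 2 :=
    Finset.sum_pos' (fun k _ => sq_nonneg (x k)) ⟨k0, Finset.mem_univ k0, lt_of_le_of_ne (sq_nonneg _) (Ne.symm (pow_ne_zero 2 hk0))⟩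
  obtain ⟨hm1, hm2⟩ := abs_le.mp hm
  nlinarith [sq_nonneg (x i + x j), sq_nonneg (x i - x j),
    mul_nonneg (by linarith : (0:ℝ) ≤ 1/2 - m) (sq_nonneg (x i - x j)),
    mul_nonneg (by linarith : (0:ℝ) ≤ 1/2 + m) (sq_nonneg (x i + x j))]

lemma stmt9_det {p : ℕ} (i j : Fin p) (hij : i ≠ j) (m : ℝ) :
    ((1 : Matrix (Fin p) (Fin p) ℝ) + stmt9pert i j m).det = 1 - m ^ 2 := by
  set A : Matrix (Fin p) (Fin p) ℝ := 1 + stmt9pert i j m with hA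
  set B : Matrix (Fin p) (Fin p) ℝ := Matrix.of fun k l =>
    if k = l then (if k = i then 1 - m ^ 2 else 1) else (if k = j ∧ l = i then m else 0) with hB
  have hupd : A.updateRow i (A i + (-m) • A j) = B := by
    ext k l
    by_cases hk : k = i
    · rw [hk, Matrix.updateRow_self]
      simp only [Pi.add_apply, Pi.smul_apply, smul_eq_mul, hA, hB,
        Matrix.add_apply, Matrix.one_apply, stmt9pert_apply, Matrix.of_apply]
      by_cases h1 : l = i <;> by_cases h2 : l = j
      · exact absurd (h1.symm.trans h2) hij
      · simp only [h1]
        simp [hij, Ne.symm hij]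
        ring
      · simp only [h2]
        simp [hij, Ne.symm hij]
      · simp [hij, Ne.symm hij, Ne.symm h1, Ne.symm h2, h1, h2]
    · rw [Matrix.updateRow_ne hk]
      simp only [hA, hB, Matrix.add_apply, Matrix.one_apply, stmt9pert_apply, Matrix.of_apply]
      by_cases h1 : k = j <;> by_cases h2 : l = i <;> by_cases h3 : k = l <;>
        by_cases h4 : l = j <;> simp_all
  have hdet : A.det = B.det := by
    rw [← hupd, Matrix.det_updateRow_add_smul_self A hij (-m)]
  have hdiag : ∏ k, B k k = 1 - m ^ 2 := by
    have : ∀ k : Fin p, B k k = if k = i then 1 - m ^ 2 else 1 := by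
      intro k; simp [hB]
    rw [Finset.prod_congr rfl (fun k _ => this k), Finset.prod_ite_eq' Finset.univ i
      (fun _ => (1 - m ^ 2 : ℝ))]
    simp
  rcases hij.lt_or_gt with h | h
  · rw [hdet, Matrix.det_of_lowerTriangular B, hdiag]
    intro k l hkl
    simp only [hB, Matrix.of_apply]
    have hkl' : (l : Fin p) < k ∨ True := Or.inr trivial
    have hne : k ≠ l := by
      intro he; subst he; exact absurd hkl (lt_irrefl _)
    rw [if_neg hne, if_neg]
    rintro ⟨rfl, rfl⟩
    exact absurd hkl (not_lt.mpr h.le)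
  · rw [hdet, Matrix.det_of_upperTriangular, hdiag]
    intro k l hkl
    simp only [hB, Matrix.of_apply]
    have hne : k ≠ l := by
      intro he; subst he; exact absurd hkl (lt_irrefl _)
    rw [if_neg hne, if_neg]
    rintro ⟨rfl, rfl⟩
    exact absurd hkl (not_lt.mpr h.le)

def stmt9dv {p : ℕ} (i j : Fin p) (t : ℝ) : Fin p → ℝ := fun k => if k = i ∨ k = j then t else 1

lemma stmt9_dv_i {p : ℕ} (i j : Fin p) (t : ℝ) : stmt9dv i j t i = t := by simp [stmt9dv]
lemma stmt9_dv_j {p : ℕ} (i j : Fin p) (t : ℝ) : stmt9dv i j t j = t := by simp [stmt9dv]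

lemma stmt9_prod {p : ℕ} (i j : Fin p) (hij : i ≠ j) (t : ℝ) :
    ∏ k, stmt9dv i j t k = t ^ 2 := by
  have : ∀ k, stmt9dv i j t k = (if k = i then t else 1) * (if k = j then t else 1) := by
    intro k
    by_cases h1 : k = i <;> by_cases h2 : k = j <;>
      simp_all [stmt9dv] <;> exact absurd (h1.symm.trans h2) hij
  rw [Finset.prod_congr rfl (fun k _ => this k), Finset.prod_mul_distrib,
    Finset.prod_ite_eq' Finset.univ i (fun _ => t), Finset.prod_ite_eq' Finset.univ j (fun _ => t)]
  simp [sq]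

lemma stmt9_ite_split {p : ℕ} (i j : Fin p) (hij : i ≠ j) (k l : Fin p) (f : ℝ) :
    (if k = i ∧ l = j ∨ k = j ∧ l = i then f else 0)
      = (if k = i then (if l = j then f else 0) else 0)
        + (if k = j then (if l = i then f else 0) else 0) := by
  by_cases h1 : k = i <;> by_cases h2 : k = j <;> by_cases h3 : l = i <;>
    by_cases h4 : l = j <;> simp_all <;>
    first
      | exact absurd (h1.symm.trans h2) hij
      | exact absurd (h4.symm.trans h3).symm hij

lemma stmt9_trace {p : ℕ} (C : Matrix (Fin p) (Fin p) ℝ) (hC : C.IsSymm)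
    (i j : Fin p) (hij : i ≠ j) (μ t : ℝ) :
    ((1 + stmt9pert i j μ) * Matrix.diagonal (stmt9dv i j t) * C
        * Matrix.diagonal (stmt9dv i j t)).trace
      = (∑ k, stmt9dv i j t k ^ 2 * C k k) + 2 * μ * C i j * t ^ 2 := by
  set v := stmt9dv i j t with hv
  have key : ∀ R : Matrix (Fin p) (Fin p) ℝ,
      (R * Matrix.diagonal v * C * Matrix.diagonal v).trace
        = ∑ k, (∑ l, R k l * v l * C l k) * v k := by
    intro R
    simp only [Matrix.trace, Matrix.diag]
    refine Finset.sum_congr rfl fun k _ => ?_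
    rw [Matrix.mul_diagonal, Matrix.mul_apply]
    refine congrArg (· * v k) (Finset.sum_congr rfl fun l _ => ?_)
    rw [Matrix.mul_diagonal]
  rw [key]
  have expand : ∀ k, (∑ l, ((1 : Matrix (Fin p) (Fin p) ℝ) + stmt9pert i j μ) k l * v l * C l k)
      = v k * C k k + ((if k = i then μ * v j * C j k else 0) + (if k = j then μ * v i * C i k else 0)) := by
    intro k
    have hterm : ∀ l, ((1 : Matrix (Fin p) (Fin p) ℝ) + stmt9pert i j μ) k l * v l * C l k
        = (if k = l then v l * C l k else 0)
          + ((if k = i then (if l = j then μ * v l * C l k else 0) else 0)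
            + (if k = j then (if l = i then μ * v l * C l k else 0) else 0)) := by
      intro l
      rw [Matrix.add_apply, Matrix.one_apply, stmt9pert_apply, add_mul, add_mul,
        ite_mul, ite_mul, one_mul, zero_mul, zero_mul, ite_mul, ite_mul, zero_mul, zero_mul,
        stmt9_ite_split i j hij k l]
    rw [Finset.sum_congr rfl (fun l _ => hterm l), Finset.sum_add_distrib,
      Finset.sum_add_distrib, Finset.sum_ite_eq Finset.univ k (fun l => v l * C l k)]
    simp only [Finset.mem_univ, if_true]
    congr 1
    congr 1 <;> split_ifs with h <;> simp [Finset.sum_ite_eq']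
  rw [Finset.sum_congr rfl (fun k _ => by rw [expand k])]
  simp only [add_mul, Finset.sum_add_distrib, ite_mul, zero_mul, Finset.sum_ite_eq',
    Finset.mem_univ, if_true]
  have h1 : C j i = C i j := hC.apply i j
  have hvi : v i = t := by rw [hv]; exact stmt9_dv_i i j t
  have hvj : v j = t := by rw [hv]; exact stmt9_dv_j i j t
  rw [h1, hvi, hvj, Finset.sum_congr rfl fun x _ => (by ring : v x * C x x * v x = v x ^ 2 * C x x)]
  ring

lemma stmt9_S {p : ℕ} (i j : Fin p) (hij : i ≠ j) (d : ℝ) :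
    (∑ k, stmt9dv i j (d+1) k ^ 2) + (∑ k, stmt9dv i j (d-1) k ^ 2)
      = 2 * (∑ k, stmt9dv i j d k ^ 2) + 4 := by
  have hpt : ∀ k, stmt9dv i j (d+1) k ^ 2 + stmt9dv i j (d-1) k ^ 2
      = 2 * stmt9dv i j d k ^ 2 + ((if k = i then 2 else 0) + (if k = j then (2:ℝ) else 0)) := by
    intro k
    by_cases h1 : k = i <;> by_cases h2 : k = j
    · exact absurd (h1.symm.trans h2) hij
    all_goals simp [stmt9dv, h1, h2, hij, Ne.symm hij] <;> ring
  calc (∑ k, stmt9dv i j (d+1) k ^ 2) + (∑ k, stmt9dv i j (d-1) k ^ 2)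
      = ∑ k, (stmt9dv i j (d+1) k ^ 2 + stmt9dv i j (d-1) k ^ 2) := by
        rw [Finset.sum_add_distrib]
    _ = ∑ k, (2 * stmt9dv i j d k ^ 2 + ((if k = i then 2 else 0) + (if k = j then (2:ℝ) else 0))) := by
        exact Finset.sum_congr rfl fun k _ => hpt k
    _ = 2 * (∑ k, stmt9dv i j d k ^ 2) + 4 := by
        simp [Finset.sum_add_distrib, Finset.mul_sum, Finset.sum_ite_eq', Finset.mem_univ]
        ring

theorem stmt_9 {p : ℕ} (C : Matrix (Fin p) (Fin p) ℝ)
    (hC : C.IsSymm) (hCd : ∀ i, C i i = 1)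
    (hCne : ∃ i j, i ≠ j ∧ C i j ≠ 0)
    (α : ℝ) (hα : α < 1) :
    ¬ ConvexOn ℝ
      {Rd : Matrix (Fin p) (Fin p) ℝ × (Fin p → ℝ) |
        Rd.1.PosDef ∧ (∀ i, Rd.1 i i = 1) ∧ (∀ i, 0 < Rd.2 i)}
      (fun Rd =>
        -Real.log Rd.1.det - 2 * (1 - α) * Real.log (∏ i, Rd.2 i)
          + Matrix.trace (Rd.1 * Matrix.diagonal Rd.2 * C * Matrix.diagonal Rd.2)) := by
  rintro ⟨-, hcvx⟩
  obtain ⟨i, j, hij, hc⟩ := hCne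
  have habs : 0 < |C i j| := abs_pos.mpr hc
  set c : ℝ := C i j with hcdef
  set m : ℝ := -c / (2 * |c|) with hmdef
  have hc2 : (4:ℝ) * c ^ 2 ≠ 0 := mul_ne_zero (by norm_num) (pow_ne_zero 2 hc)
  have hm2 : m ^ 2 = 1/4 := by
    have h4 : (2*|c|)^2 = 4 * c^2 := by rw [mul_pow, sq_abs]; norm_num
    rw [hmdef, div_pow, neg_sq, h4, div_eq_iff hc2]
    ring
  have hmabs : |m| ≤ 1/2 := by
    rw [hmdef, abs_div, abs_neg, abs_mul, abs_abs, abs_two,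
      div_le_iff₀ (by positivity : (0:ℝ) < 2 * |c|)]
    linarith
  have hmc : m * c = -|c| / 2 := by
    rw [hmdef]
    field_simp
    linear_combination sq_abs c
  set u : ℝ := 1 - α with hudef
  have hu : 0 < u := by simp [hudef]; linarith
  set d : ℝ := max 2 ((5 + 4*u)/(4*|c|) + 1) with hddef
  have hd2 : (2:ℝ) ≤ d := le_max_left _ _
  have hdd : (5 + 4*u)/(4*|c|) + 1 ≤ d := le_max_right _ _
  have hdc : 5 + 4*u + 4*|c| ≤ 4 * |c| * d := by
    have h4c : (0:ℝ) < 4*|c| := by linarith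
    have hcne : |c| ≠ 0 := ne_of_gt habs
    have := mul_le_mul_of_nonneg_left hdd h4c.le
    calc 5 + 4*u + 4*|c| = 4*|c| * ((5 + 4*u)/(4*|c|) + 1) := by
          field_simp
      _ ≤ 4 * |c| * d := this
  -- the three points
  set x : Matrix (Fin p) (Fin p) ℝ × (Fin p → ℝ) :=
    (1 + stmt9pert i j m, stmt9dv i j (d+1)) with hxdef
  set y : Matrix (Fin p) (Fin p) ℝ × (Fin p → ℝ) :=
    (1 + stmt9pert i j (-m), stmt9dv i j (d-1)) with hydef
  have hdvpos : ∀ t : ℝ, 0 < t → ∀ k, 0 < stmt9dv i j t k := by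
    intro t ht k
    unfold stmt9dv
    split_ifs <;> norm_num [ht]
  have hx : x ∈ {Rd : Matrix (Fin p) (Fin p) ℝ × (Fin p → ℝ) |
      Rd.1.PosDef ∧ (∀ i, Rd.1 i i = 1) ∧ (∀ i, 0 < Rd.2 i)} :=
    ⟨stmt9_posdef i j hij m hmabs, stmt9_diag i j hij m,
      hdvpos (d+1) (by linarith)⟩
  have hy : y ∈ {Rd : Matrix (Fin p) (Fin p) ℝ × (Fin p → ℝ) |
      Rd.1.PosDef ∧ (∀ i, Rd.1 i i = 1) ∧ (∀ i, 0 < Rd.2 i)} :=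
    ⟨stmt9_posdef i j hij (-m) (by rwa [abs_neg]), stmt9_diag i j hij (-m),
      hdvpos (d-1) (by linarith)⟩
  have hmid : (1/2 : ℝ) • x + (1/2 : ℝ) • y
      = ((1 : Matrix (Fin p) (Fin p) ℝ), stmt9dv i j d) := by
    rw [hxdef, hydef, Prod.smul_mk, Prod.smul_mk, Prod.mk_add_mk, Prod.mk.injEq]
    constructor
    · ext k l
      simp only [Matrix.add_apply, Matrix.smul_apply, smul_eq_mul, stmt9pert_apply,
        Matrix.one_apply]
      split_ifs <;> ring
    · funext k
      simp only [Pi.add_apply, Pi.smul_apply, smul_eq_mul]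
      unfold stmt9dv
      split_ifs <;> ring
  have hkey := hcvx hx hy (by norm_num : (0:ℝ) ≤ 1/2) (by norm_num : (0:ℝ) ≤ 1/2) (by norm_num)
  rw [hmid] at hkey
  simp only [hxdef, hydef, smul_eq_mul] at hkey
  -- evaluate the traces
  have hmidtr : Matrix.trace ((1 : Matrix (Fin p) (Fin p) ℝ) * Matrix.diagonal (stmt9dv i j d)
      * C * Matrix.diagonal (stmt9dv i j d)) = ∑ k, stmt9dv i j d k ^ 2 := by
    have h10 : (1 + stmt9pert i j 0) = (1 : Matrix (Fin p) (Fin p) ℝ) := by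
      ext k l; simp [stmt9pert_apply]
    rw [← h10, stmt9_trace C hC i j hij 0 d]
    simp [hCd]
  rw [hmidtr, stmt9_trace C hC i j hij m (d+1), stmt9_trace C hC i j hij (-m) (d-1),
    stmt9_det i j hij m, stmt9_det i j hij (-m), stmt9_prod i j hij,
    stmt9_prod i j hij, stmt9_prod i j hij, Matrix.det_one, Real.log_one,
    Real.log_pow, Real.log_pow, Real.log_pow, neg_sq, hm2] at hkey
  simp only [hCd, mul_one, Nat.cast_ofNat] at hkey
  norm_num at hkey
  rw [← hcdef] at hkey
  clear hcvx hx hy hmid hmidtr hxdef hydef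
  clear_value c m u d
  -- bounds
  have hd1 : (0:ℝ) < d - 1 := by linarith
  have hdpos : (0:ℝ) < d := by linarith
  have hElog : 2 * Real.log d - Real.log (d+1) - Real.log (d-1) ≤ 1 := by
    have hprod : Real.log (d+1) + Real.log (d-1) = Real.log (d^2 - 1) := by
      rw [← Real.log_mul (by linarith) (by linarith)]
      ring_nf
    have hsq : 2 * Real.log d = Real.log (d^2) := by
      rw [Real.log_pow]; push_cast; ring
    have hpos1 : (0:ℝ) < d^2 - 1 := by nlinarith
    have hdiv : Real.log (d^2) - Real.log (d^2-1) = Real.log (d^2 / (d^2-1)) := by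
      rw [Real.log_div (by positivity) (ne_of_gt hpos1)]
    have hb : Real.log (d^2/(d^2-1)) ≤ d^2/(d^2-1) - 1 :=
      Real.log_le_sub_one_of_pos (by positivity)
    have hb2 : d^2/(d^2-1) ≤ 2 := by
      rw [div_le_iff₀ hpos1]; nlinarith
    linarith [hprod, hsq, hdiv, hb, hb2]
  have hlog34 : -Real.log (3/4) ≤ 1/3 := by
    have h1 : -Real.log (3/4) = Real.log (4/3) := by
      rw [← Real.log_inv]; norm_num
    have h2 : Real.log (4/3) ≤ 4/3 - 1 := Real.log_le_sub_one_of_pos (by norm_num)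
    linarith
  have hS := stmt9_S i j hij d
  have hTr : 2*m*c*(d+1)^2 + 2*(-m)*c*(d-1)^2 = -4 * |c| * d := by
    linear_combination (8*d) * hmc
  have hlogterm : u * (8 * Real.log d - 4 * Real.log (d+1) - 4 * Real.log (d-1)) ≤ 4 * u := by
    nlinarith [mul_le_mul_of_nonneg_left hElog hu.le]
  linarith [hS, hTr, hlogterm, hlog34, hdc, habs, hu.le, hkey]
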